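/- A maximal set of d^N + 1 mutually unbiased bases in dimension D = d^N cannot contain more than d^{⌊N/2⌋} + 1 fully separable bases, assuming at least one of the remaining basis vectors is k-uniform with k ≤ ⌊N/2⌋; more precisely, if m_sep vectors among the m = d^N(d^N+1) MUB vectors are fully separable and at least one remaining vector is k-uniform, then the number of fully separable bases b satisfies b ≤ d^k + 1. -/

import Mathlib

open Matrix BigOperators Finset Kronecker
open scoped ComplexOrder

noncomputable section

/-- The rank-one projector `|v⟩⟨v|`. -/
def proj {n : Type*} [Fintype n] (v : n → ℂ) : Matrix n n ℂ :=
  Matrix.of fun a b => v a * star (v b)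

/-- The inner product `⟨v|w⟩` on `n → ℂ`. -/
def inner' {n : Type*} [Fintype n] (v w : n → ℂ) : ℂ := ∑ i, star (v i) * w i

/-- A density matrix: positive semidefinite with unit trace. -/
def IsDensity {n : Type*} [Fintype n] [DecidableEq n] (ρ : Matrix n n ℂ) : Prop :=
  ρ.PosSemidef ∧ ρ.trace = 1


/-- Combine an assignment on a subset `S` of parties with one on its complement. -/
def combine {N d : ℕ} (S : Finset (Fin N)) (x : {i // i ∈ S} → Fin d)
    (z : {i // i ∉ S} → Fin d) : Fin N → Fin d :=
  fun i => if h : i ∈ S then x ⟨i, h⟩ else z ⟨i, h⟩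

/-- Partial trace of a multipartite matrix onto the subset `S` of parties. -/
def reduce {N d : ℕ} (S : Finset (Fin N)) (M : Matrix (Fin N → Fin d) (Fin N → Fin d) ℂ) :
    Matrix ({i // i ∈ S} → Fin d) ({i // i ∈ S} → Fin d) ℂ :=
  Matrix.of fun x y => ∑ z : {i // i ∉ S} → Fin d, M (combine S x z) (combine S y z)

/-- A `k`-uniform pure state: every reduction to `k` parties is maximally mixed. -/
def kUniform {N d : ℕ} (k : ℕ) (v : (Fin N → Fin d) → ℂ) : Prop :=
  ∀ S : Finset (Fin N), S.card = k → reduce S (proj v) = ((1:ℂ)/(d^k : ℂ)) • 1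

/-- A fully separable (product) multipartite pure state. -/
def FullySep {N d : ℕ} (v : (Fin N → Fin d) → ℂ) : Prop :=
  ∃ w : Fin N → Fin d → ℂ, ∀ x, v x = ∏ i, w i (x i)


lemma inner'_conj {n : Type*} [Fintype n] (v w : n → ℂ) : star (inner' v w) = inner' w v := by
  simp [inner', mul_comm]

lemma sum4 {α β : Type*} [Fintype α] [Fintype β] (a b : α → ℂ) (c e : β → ℂ) :
    ∑ p1, ∑ p2, ∑ q1, ∑ q2, a p1 * b p2 * c q1 * e q2
      = (∑ p1, a p1) * (∑ p2, b p2) * (∑ q1, c q1) * (∑ q2, e q2) := by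
  simp only [mul_assoc, ← Finset.mul_sum, ← Finset.sum_mul]

lemma sum2 {α : Type*} [Fintype α] (a b : α → ℂ) :
    ∑ p1, ∑ p2, a p1 * b p2 = (∑ p1, a p1) * (∑ p2, b p2) := by
  simp only [← Finset.mul_sum, ← Finset.sum_mul]

lemma sum_comm4 {α β γ δ : Type*} [Fintype α] [Fintype β] [Fintype γ] [Fintype δ]
    (F : α → β → γ → δ → ℂ) :
    ∑ a, ∑ b, ∑ c, ∑ d, F a b c d = ∑ c, ∑ d, ∑ a, ∑ b, F a b c d := by
  have h1 : ∀ a, (∑ b, ∑ c, ∑ d, F a b c d) = ∑ c, ∑ d, ∑ b, F a b c d := fun a =>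
    Finset.sum_comm.trans (Finset.sum_congr rfl fun c _ => Finset.sum_comm)
  simp only [h1]
  exact Finset.sum_comm.trans (Finset.sum_congr rfl fun c _ => Finset.sum_comm)

lemma design {D : ℕ} (hD : 0 < D) {ι : Type*} [Fintype ι] [DecidableEq ι]
    (hcard : Fintype.card ι = D)
    (B : Fin (D+1) → Fin D → ι → ℂ)
    (horth : ∀ a i j, inner' (B a i) (B a j) = if i = j then 1 else 0)
    (hub : ∀ a b, a ≠ b → ∀ i j, ‖inner' (B a i) (B b j)‖^2 = 1/(D:ℝ)) :
    ∀ p1 p2 q1 q2 : ι,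
      (∑ r : Fin (D+1) × Fin D, B r.1 r.2 p1 * B r.1 r.2 p2 * star (B r.1 r.2 q1) * star (B r.1 r.2 q2)) =
      ((if p1 = q1 then 1 else 0) * (if p2 = q2 then 1 else 0)
        + (if p1 = q2 then 1 else 0) * (if p2 = q1 then 1 else 0) : ℂ) := by
  classical
  have hDne : (D:ℂ) ≠ 0 := by exact_mod_cast hD.ne'
  set J := (Fin (D+1) × Fin D) with hJdef
  let φ : J → ι → ℂ := fun r => B r.1 r.2
  let g : J → J → ℂ := fun r r' => inner' (φ r) (φ r')
  have hg1 : ∀ r : J, g r r = 1 := by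
    intro r; simpa using horth r.1 r.2 r.2
  have hG : ∀ r r' : J, g r r' * g r' r
      = if r = r' then 1 else if r.1 = r'.1 then 0 else ((1:ℂ)/D) := by
    intro r r'
    by_cases h1 : r.1 = r'.1
    · obtain ⟨a, i⟩ := r; obtain ⟨b, j⟩ := r'
      simp only at h1; subst h1
      have e1 : g (a,i) (a,j) = if i = j then 1 else 0 := horth a i j
      have e2 : g (a,j) (a,i) = if j = i then 1 else 0 := horth a j i
      show g (a,i) (a,j) * g (a,j) (a,i) = _
      rw [e1, e2]
      by_cases h2 : i = j
      · simp [h2, Prod.ext_iff]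
      · have hpe : ¬(((a,i) : J) = (a,j)) := by simp [Prod.ext_iff, h2]
        simp [h2, Ne.symm h2, hpe]
    · have hne : r ≠ r' := fun h => h1 (by rw [h])
      have h2 := hub r.1 r'.1 h1 r.2 r'.2
      have : g r r' * g r' r = ((‖g r r'‖^2 : ℝ) : ℂ) := by
        show inner' (φ r) (φ r') * inner' (φ r') (φ r) = _
        rw [← inner'_conj (φ r) (φ r'), Complex.star_def, Complex.mul_conj']
        push_cast; ring
      rw [this, h2]
      simp [hne, h1]
  have hGsum : ∀ r : J, ∑ r' : J, (g r r' * g r' r)^2 = 2 := by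
    intro r
    have hsplit : ∀ r' : J, (g r r' * g r' r)^2
        = (if r = r' then 1 else 0) + (if r.1 = r'.1 then 0 else ((1:ℂ)/D^2)) := by
      intro r'
      rw [hG r r']
      by_cases h1 : r = r'
      · simp [h1]
      · by_cases h2 : r.1 = r'.1
        · simp [h1, h2]
        · simp only [if_neg h1, if_neg h2]
          rw [div_pow]; norm_num
    simp only [hsplit]
    rw [Finset.sum_add_distrib]
    rw [Finset.sum_ite_eq univ r (fun _ => (1:ℂ))]
    have : ∀ r' : J, (if r.1 = r'.1 then (0:ℂ) else (1/D^2))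
        = 1/D^2 - (if r.1 = r'.1 then (1/D^2 : ℂ) else 0) := by
      intro r'; split_ifs <;> ring
    simp only [this]
    rw [Finset.sum_sub_distrib, Finset.sum_const]
    have hcount : ∑ r' : J, (if r.1 = r'.1 then (1/D^2 : ℂ) else 0)
        = D * (1/D^2) := by
      rw [Fintype.sum_prod_type]
      have : ∀ b : Fin (D+1), ∑ j : Fin D, (if r.1 = b then (1/D^2 : ℂ) else 0)
          = if r.1 = b then (D * (1/D^2) : ℂ) else 0 := by
        intro b; split_ifs <;> simp [Finset.sum_const, Finset.card_univ]
      simp only [this]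
      rw [Finset.sum_ite_eq univ r.1 (fun _ => ((D:ℂ) * (1/D^2)))]
      simp
    rw [hcount]
    simp [Finset.card_univ, hJdef, Fintype.card_prod]
    field_simp
    ring
  -- the big Gram matrix argument
  let A : (ι×ι) → (ι×ι) → ℂ := fun p q =>
    ∑ r : J, φ r p.1 * φ r p.2 * star (φ r q.1) * star (φ r q.2)
  let C : (ι×ι) → (ι×ι) → ℂ := fun p q =>
    (if q = p then 1 else 0) + (if q = (p.2, p.1) then 1 else 0)
  have hCstar : ∀ p q, star (C p q) = C p q := by
    intro p q; simp only [C, star_add]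
    congr 1 <;> · split_ifs <;> simp
  have e1 : ∀ r r' : J, ∑ x, φ r x * star (φ r' x) = g r' r := by
    intro r r'; simp [g, inner', mul_comm]
  have e2 : ∀ r r' : J, ∑ x, star (φ r x) * φ r' x = g r r' := fun _ _ => rfl
  -- S1
  have hS1 : ∑ p : ι×ι, ∑ q : ι×ι, A p q * star (A p q) = 2 * ((D+1) * D) := by
    have hexp : ∀ p q : ι×ι, A p q * star (A p q)
        = ∑ r : J, ∑ r' : J, (φ r p.1 * φ r p.2 * star (φ r q.1) * star (φ r q.2))
            * star (φ r' p.1 * φ r' p.2 * star (φ r' q.1) * star (φ r' q.2)) := by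
      intro p q
      show (∑ r : J, _) * star (∑ r' : J, _) = _
      rw [star_sum, Finset.sum_mul_sum]
    simp only [hexp]
    rw [sum_comm4]
    have inner_eq : ∀ r r' : J,
        (∑ p : ι×ι, ∑ q : ι×ι, (φ r p.1 * φ r p.2 * star (φ r q.1) * star (φ r q.2))
            * star (φ r' p.1 * φ r' p.2 * star (φ r' q.1) * star (φ r' q.2)))
        = (g r r' * g r' r)^2 := by
      intro r r'
      have harr : ∀ p q : ι×ι, (φ r p.1 * φ r p.2 * star (φ r q.1) * star (φ r q.2))
            * star (φ r' p.1 * φ r' p.2 * star (φ r' q.1) * star (φ r' q.2))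
          = (φ r p.1 * star (φ r' p.1)) * (φ r p.2 * star (φ r' p.2))
            * (star (φ r q.1) * φ r' q.1) * (star (φ r q.2) * φ r' q.2) := by
        intro p q
        simp only [star_mul', star_star]
        ring
      simp only [harr]
      rw [show (∑ p : ι×ι, ∑ q : ι×ι, (φ r p.1 * star (φ r' p.1)) * (φ r p.2 * star (φ r' p.2))
            * (star (φ r q.1) * φ r' q.1) * (star (φ r q.2) * φ r' q.2))
          = ∑ p1, ∑ p2, ∑ q1, ∑ q2, (φ r p1 * star (φ r' p1)) * (φ r p2 * star (φ r' p2))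
            * (star (φ r q1) * φ r' q1) * (star (φ r q2) * φ r' q2) by
        simp only [Fintype.sum_prod_type]]
      rw [sum4 (fun x => φ r x * star (φ r' x)) (fun x => φ r x * star (φ r' x))
        (fun x => star (φ r x) * φ r' x) (fun x => star (φ r x) * φ r' x)]
      rw [e1 r r', e2 r r']
      ring
    simp only [inner_eq, hGsum]
    rw [Finset.sum_const, Finset.card_univ]
    simp [hJdef, Fintype.card_prod]
    ring
  -- S2
  have hdiag : ∀ r : J, (∑ x, φ r x * star (φ r x)) = 1 := by
    intro r; rw [e1 r r]; exact hg1 r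
  have hApp : ∑ p : ι×ι, A p p = ((D+1) * D : ℂ) := by
    have : ∀ p : ι×ι, A p p = ∑ r : J, (φ r p.1 * star (φ r p.1)) * (φ r p.2 * star (φ r p.2)) := by
      intro p; simp only [A]; exact Finset.sum_congr rfl fun r _ => by ring
    simp only [this]
    rw [Finset.sum_comm]
    have : ∀ r : J, (∑ p : ι×ι, (φ r p.1 * star (φ r p.1)) * (φ r p.2 * star (φ r p.2))) = 1 := by
      intro r
      rw [show (∑ p : ι×ι, (φ r p.1 * star (φ r p.1)) * (φ r p.2 * star (φ r p.2)))
          = ∑ p1, ∑ p2, (φ r p1 * star (φ r p1)) * (φ r p2 * star (φ r p2)) by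
        simp only [Fintype.sum_prod_type]]
      rw [sum2, hdiag r]; simp
    simp only [this]
    rw [Finset.sum_const, Finset.card_univ]
    simp [hJdef, Fintype.card_prod]
  have hAswap : ∑ p : ι×ι, A p (p.2, p.1) = ((D+1) * D : ℂ) := by
    have : ∀ p : ι×ι, A p (p.2, p.1)
        = ∑ r : J, (φ r p.1 * star (φ r p.1)) * (φ r p.2 * star (φ r p.2)) := by
      intro p; simp only [A]; exact Finset.sum_congr rfl fun r _ => by ring
    simp only [this]
    rw [Finset.sum_comm]
    have : ∀ r : J, (∑ p : ι×ι, (φ r p.1 * star (φ r p.1)) * (φ r p.2 * star (φ r p.2))) = 1 := by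
      intro r
      rw [show (∑ p : ι×ι, (φ r p.1 * star (φ r p.1)) * (φ r p.2 * star (φ r p.2)))
          = ∑ p1, ∑ p2, (φ r p1 * star (φ r p1)) * (φ r p2 * star (φ r p2)) by
        simp only [Fintype.sum_prod_type]]
      rw [sum2, hdiag r]; simp
    simp only [this]
    rw [Finset.sum_const, Finset.card_univ]
    simp [hJdef, Fintype.card_prod]
  have hS2 : ∑ p : ι×ι, ∑ q : ι×ι, A p q * star (C p q) = 2 * ((D+1) * D) := by
    have : ∀ p : ι×ι, (∑ q : ι×ι, A p q * star (C p q)) = A p p + A p (p.2, p.1) := by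
      intro p
      simp only [hCstar, C, mul_add, mul_ite, mul_one, mul_zero]
      rw [Finset.sum_add_distrib, Finset.sum_ite_eq' univ p (fun q => A p q),
        Finset.sum_ite_eq' univ (p.2, p.1) (fun q => A p q)]
      simp
    simp only [this]
    rw [Finset.sum_add_distrib, hApp, hAswap]
    ring
  -- S3
  have hS3 : ∑ p : ι×ι, ∑ q : ι×ι, C p q * star (A p q) = 2 * ((D+1) * D) := by
    have : (∑ p : ι×ι, ∑ q : ι×ι, C p q * star (A p q))
        = star (∑ p : ι×ι, ∑ q : ι×ι, A p q * star (C p q)) := by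
      rw [star_sum]
      refine Finset.sum_congr rfl fun p _ => ?_
      rw [star_sum]
      refine Finset.sum_congr rfl fun q _ => ?_
      rw [star_mul', star_star]
      exact mul_comm _ _
    rw [this, hS2]
    simp
  -- S4
  have hS4 : ∑ p : ι×ι, ∑ q : ι×ι, C p q * star (C p q) = 2 * (D:ℂ)^2 + 2 * D := by
    have hrow : ∀ p : ι×ι, (∑ q : ι×ι, C p q * star (C p q))
        = 2 + (if p.1 = p.2 then 2 else 0) := by
      intro p
      simp only [hCstar]
      by_cases hp : p.1 = p.2
      · have hpp : ((p.2, p.1) : ι×ι) = p := by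
          rw [← hp]; exact Prod.ext rfl (by rw [hp])
        have : ∀ q : ι×ι, C p q * C p q = if q = p then 4 else 0 := by
          intro q; simp only [C, hpp]; split_ifs <;> norm_num
        simp only [this]
        rw [Finset.sum_ite_eq' univ p (fun _ => (4:ℂ))]
        simp [hp]
        norm_num
      · have hpp : ((p.2, p.1) : ι×ι) ≠ p := by
          intro h; exact hp ((congrArg Prod.fst h).symm)
        have : ∀ q : ι×ι, C p q * C p q
            = (if q = p then 1 else 0) + (if q = (p.2, p.1) then 1 else 0) := by
          intro q; simp only [C]
          by_cases h1 : q = p <;> by_cases h2 : q = (p.2, p.1)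
          · exact absurd (h1.symm.trans h2).symm hpp
          · have hpps : p ≠ ((p.2, p.1) : ι×ι) := fun h => hpp h.symm
            simp [h1, h2, hpps]
          · have hpps : p ≠ ((p.2, p.1) : ι×ι) := fun h => hpp h.symm
            simp [h1, h2, hpps, hpp]
          · simp [h1, h2]
        simp only [this]
        rw [Finset.sum_add_distrib, Finset.sum_ite_eq' univ p (fun _ => (1:ℂ)),
          Finset.sum_ite_eq' univ (p.2, p.1) (fun _ => (1:ℂ))]
        simp [hp]
        norm_num
    simp only [hrow]
    rw [Finset.sum_add_distrib, Finset.sum_const, Finset.card_univ]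
    have : ∑ p : ι×ι, (if p.1 = p.2 then (2:ℂ) else 0) = 2 * D := by
      rw [Fintype.sum_prod_type]
      have : ∀ p1 : ι, (∑ p2 : ι, if p1 = p2 then (2:ℂ) else 0) = 2 := by
        intro p1; rw [Finset.sum_ite_eq univ p1 (fun _ => (2:ℂ))]; simp
      simp only [this]
      rw [Finset.sum_const, Finset.card_univ, hcard]
      simp [mul_comm]
    rw [this]
    simp [Fintype.card_prod, hcard]
    ring
  -- total zero
  have hzero : ∑ p : ι×ι, ∑ q : ι×ι, (A p q - C p q) * star (A p q - C p q) = 0 := by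
    have hexp : ∀ p q : ι×ι, (A p q - C p q) * star (A p q - C p q)
        = A p q * star (A p q) - A p q * star (C p q)
          - C p q * star (A p q) + C p q * star (C p q) := by
      intro p q; rw [star_sub]; ring
    simp only [hexp]
    simp only [Finset.sum_add_distrib, Finset.sum_sub_distrib]
    rw [hS1, hS2, hS3, hS4]
    ring
  have hAC : ∀ p q : ι×ι, A p q = C p q := by
    have hre : ∑ p : ι×ι, ∑ q : ι×ι, Complex.normSq (A p q - C p q) = 0 := by
      have hc : ((∑ p : ι×ι, ∑ q : ι×ι, Complex.normSq (A p q - C p q) : ℝ) : ℂ) = 0 := by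
        push_cast
        rw [← hzero]
        refine Finset.sum_congr rfl fun p _ => Finset.sum_congr rfl fun q _ => ?_
        exact (Complex.mul_conj _).symm
      exact_mod_cast hc
    intro p q
    have h1 : ∀ p ∈ (univ : Finset (ι×ι)),
        (0:ℝ) ≤ ∑ q : ι×ι, Complex.normSq (A p q - C p q) :=
      fun p _ => Finset.sum_nonneg fun q _ => Complex.normSq_nonneg _
    rw [Finset.sum_eq_zero_iff_of_nonneg h1] at hre
    have h2 := hre p (mem_univ p)
    rw [Finset.sum_eq_zero_iff_of_nonneg (fun q _ => Complex.normSq_nonneg _)] at h2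
    exact sub_eq_zero.mp (Complex.normSq_eq_zero.mp (h2 q (mem_univ q)))
  intro p1 p2 q1 q2
  have hfin := hAC (p1,p2) (q1,q2)
  show A (p1,p2) (q1,q2) = _
  rw [hfin]
  have c1 : (((q1,q2) : ι×ι) = (p1,p2)) ↔ (p1 = q1 ∧ p2 = q2) := by
    rw [Prod.ext_iff]; exact and_congr eq_comm eq_comm
  have c2 : (((q1,q2) : ι×ι) = ((p1,p2).2,(p1,p2).1)) ↔ (p1 = q2 ∧ p2 = q1) := by
    rw [Prod.ext_iff]
    exact ⟨fun h => ⟨h.2.symm, h.1.symm⟩, fun h => ⟨h.2.symm, h.1.symm⟩⟩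
  show (if ((q1,q2) : ι×ι) = (p1,p2) then (1:ℂ) else 0)
      + (if ((q1,q2) : ι×ι) = ((p1,p2).2,(p1,p2).1) then (1:ℂ) else 0) = _
  congr 1
  · rw [ite_mul, one_mul, zero_mul, ← ite_and]
    exact if_congr c1 rfl rfl
  · rw [ite_mul, one_mul, zero_mul, ← ite_and]
    exact if_congr c2 rfl rfl


def splitEquiv {N : ℕ} (S : Finset (Fin N)) (d : ℕ) :
    (({i // i ∈ S} → Fin d) × ({i // i ∉ S} → Fin d)) ≃ (Fin N → Fin d) where
  toFun p := combine S p.1 p.2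
  invFun f := (fun i => f i.1, fun i => f i.1)
  left_inv p := by
    refine Prod.ext ?_ ?_
    · funext i; exact dif_pos i.2
    · funext i; exact dif_neg i.2
  right_inv f := by
    funext i; by_cases h : i ∈ S <;> simp [combine, h]

lemma sum_combine {N d : ℕ} (S : Finset (Fin N)) (F : (Fin N → Fin d) → ℂ) :
    ∑ x : {i // i ∈ S} → Fin d, ∑ z : {i // i ∉ S} → Fin d, F (combine S x z) = ∑ p, F p := by
  rw [← Equiv.sum_comp (splitEquiv S d) F, Fintype.sum_prod_type]
  rfl

lemma combine_inj {N d : ℕ} (S : Finset (Fin N)) (x y : {i // i ∈ S} → Fin d)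
    (z w : {i // i ∉ S} → Fin d) : combine S x z = combine S y w ↔ (x = y ∧ z = w) := by
  constructor
  · intro h
    have := (splitEquiv S d).injective (a₁ := (x,z)) (a₂ := (y,w)) h
    exact ⟨congrArg Prod.fst this, congrArg Prod.snd this⟩
  · rintro ⟨rfl, rfl⟩; rfl

/-- entries of the reduction of `proj v` to `S`. -/
def red {N d : ℕ} (S : Finset (Fin N)) (v : (Fin N → Fin d) → ℂ)
    (x y : {i // i ∈ S} → Fin d) : ℂ :=
  ∑ z : {i // i ∉ S} → Fin d, v (combine S x z) * star (v (combine S y z))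

lemma red_trace {N d : ℕ} (S : Finset (Fin N)) (v : (Fin N → Fin d) → ℂ)
    (hv : inner' v v = 1) : ∑ x, red S v x x = 1 := by
  unfold red
  rw [sum_combine S (fun p => v p * star (v p))]
  rw [← hv]
  exact Finset.sum_congr rfl fun p _ => mul_comm _ _

lemma red_diag {N d : ℕ} (S : Finset (Fin N)) (v : (Fin N → Fin d) → ℂ)
    (x : {i // i ∈ S} → Fin d) :
    red S v x x = ((∑ z : {i // i ∉ S} → Fin d, Complex.normSq (v (combine S x z)) : ℝ) : ℂ) := by
  unfold red
  push_cast
  exact Finset.sum_congr rfl fun z _ => (Complex.mul_conj _)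

/-- purity lower bound: `1 ≤ d^|S| * purity`. -/
lemma purity_lb {N d : ℕ} (S : Finset (Fin N)) (v : (Fin N → Fin d) → ℂ)
    (hv : inner' v v = 1) :
    1 ≤ (d:ℝ)^S.card * ∑ x, ∑ y, Complex.normSq (red S v x y) := by
  set X := ({i // i ∈ S} → Fin d)
  let q : X → ℝ := fun x => ∑ z : {i // i ∉ S} → Fin d, Complex.normSq (v (combine S x z))
  have hq : ∀ x, red S v x x = ((q x : ℝ) : ℂ) := red_diag S v
  have hq1 : ∑ x, q x = 1 := by
    have := red_trace S v hv
    rw [show (∑ x, red S v x x) = ((∑ x, q x : ℝ) : ℂ) by push_cast; exact Finset.sum_congr rfl fun x _ => hq x] at this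
    exact_mod_cast this
  have hcard : (Fintype.card X : ℝ) = (d:ℝ)^S.card := by
    simp [X, Fintype.card_fun, Fintype.card_coe]
  have hcs := sq_sum_le_card_mul_sum_sq (s := (univ : Finset X)) (f := q)
  rw [hq1] at hcs
  simp only [one_pow, Finset.card_univ] at hcs
  have hdiag : ∑ x, q x ^ 2 ≤ ∑ x, ∑ y, Complex.normSq (red S v x y) := by
    apply Finset.sum_le_sum
    intro x _
    have h1 : q x ^ 2 = Complex.normSq (red S v x x) := by
      rw [hq x]; rw [Complex.normSq_ofReal]; ring
    rw [h1]
    exact Finset.single_le_sum (f := fun y => Complex.normSq (red S v x y))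
      (fun y _ => Complex.normSq_nonneg _) (mem_univ x)
  calc (1:ℝ) ≤ (Fintype.card X : ℝ) * ∑ x, q x ^ 2 := hcs
    _ = (d:ℝ)^S.card * ∑ x, q x ^ 2 := by rw [hcard]
    _ ≤ (d:ℝ)^S.card * ∑ x, ∑ y, Complex.normSq (red S v x y) := by
        apply mul_le_mul_of_nonneg_left hdiag (by positivity)

lemma prod_split {N : ℕ} (S : Finset (Fin N)) (f : Fin N → ℂ) :
    (∏ i : {i // i ∈ S}, f i.1) * (∏ i : {i // i ∉ S}, f i.1) = ∏ i, f i := by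
  classical
  have h1 : ∏ i : {i // i ∈ S}, f i.1 = ∏ i ∈ S, f i :=
    (Finset.prod_subtype S (fun x => Iff.rfl) f).symm
  have h2 : ∏ i : {i // i ∉ S}, f i.1 = ∏ i ∈ Sᶜ, f i :=
    (Finset.prod_subtype Sᶜ (fun x => Finset.mem_compl) f).symm
  rw [h1, h2, Finset.prod_mul_prod_compl]

/-- separable states have pure reductions. -/
lemma purity_sep {N d : ℕ} (S : Finset (Fin N)) (v : (Fin N → Fin d) → ℂ)
    (hv : inner' v v = 1) (hsep : FullySep v) :
    ∑ x, ∑ y, Complex.normSq (red S v x y) = 1 := by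
  obtain ⟨w, hw⟩ := hsep
  let u : ({i // i ∈ S} → Fin d) → ℂ := fun x => ∏ i : {i // i ∈ S}, w i.1 (x i)
  let t : ({i // i ∉ S} → Fin d) → ℂ := fun z => ∏ i : {i // i ∉ S}, w i.1 (z i)
  have hsplit : ∀ x z, v (combine S x z) = u x * t z := by
    intro x z
    rw [hw]
    rw [← prod_split S (fun i => w i (combine S x z i))]
    congr 1
    · exact Finset.prod_congr rfl fun i _ => by rw [show combine S x z i.1 = x i from dif_pos i.2]
    · exact Finset.prod_congr rfl fun i _ => by rw [show combine S x z i.1 = z i from dif_neg i.2]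
  set σ : ℂ := ∑ z : {i // i ∉ S} → Fin d, t z * star (t z) with hσ
  have hred : ∀ x y, red S v x y = u x * star (u y) * σ := by
    intro x y
    unfold red
    simp only [hsplit]
    rw [Finset.mul_sum]
    refine Finset.sum_congr rfl fun z _ => ?_
    rw [star_mul']
    ring
  have htr : (∑ x, u x * star (u x)) * σ = 1 := by
    rw [← red_trace S v hv, Finset.sum_mul]
    exact Finset.sum_congr rfl fun x _ => (hred x x).symm
  have : ∑ x, ∑ y, Complex.normSq (red S v x y)
      = Complex.normSq ((∑ x, u x * star (u x)) * σ) := by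
    rw [Complex.normSq_mul]
    have husum : (∑ x, u x * star (u x)) = ((∑ x, Complex.normSq (u x) : ℝ) : ℂ) := by
      push_cast; exact Finset.sum_congr rfl fun x _ => (Complex.mul_conj _)
    rw [husum, Complex.normSq_ofReal]
    simp only [hred]
    rw [show (∑ x, Complex.normSq (u x)) * (∑ x, Complex.normSq (u x))
        = ∑ x, ∑ y, Complex.normSq (u x) * Complex.normSq (u y) by
      rw [Finset.sum_mul_sum]]
    rw [Finset.sum_mul]
    refine Finset.sum_congr rfl fun x _ => ?_
    rw [Finset.sum_mul]
    refine Finset.sum_congr rfl fun y _ => ?_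
    rw [Complex.normSq_mul, Complex.normSq_mul, Complex.star_def, Complex.normSq_conj]
  rw [this, htr]
  simp

lemma red_star {N d : ℕ} (S : Finset (Fin N)) (v : (Fin N → Fin d) → ℂ)
    (x y : {i // i ∈ S} → Fin d) : star (red S v x y) = red S v y x := by
  unfold red
  rw [star_sum]
  refine Finset.sum_congr rfl fun z _ => ?_
  rw [star_mul', star_star]
  exact mul_comm _ _

lemma sum_comm3 {α β γ : Type*} [Fintype α] [Fintype β] [Fintype γ]
    (F : α → β → γ → ℂ) :
    ∑ a, ∑ b, ∑ c, F a b c = ∑ b, ∑ c, ∑ a, F a b c :=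
  Finset.sum_comm.trans (Finset.sum_congr rfl fun _ _ => Finset.sum_comm)


lemma purity_sum {N d D : ℕ} (hD : 0 < D)
    (hDcard : Fintype.card (Fin N → Fin d) = D)
    (S : Finset (Fin N))
    (B : Fin (D+1) → Fin D → (Fin N → Fin d) → ℂ)
    (horth : ∀ a i j, inner' (B a i) (B a j) = if i = j then 1 else 0)
    (hub : ∀ a b, a ≠ b → ∀ i j, ‖inner' (B a i) (B b j)‖^2 = 1/(D:ℝ)) :
    ∑ r : Fin (D+1) × Fin D, ∑ x, ∑ y, Complex.normSq (red S (B r.1 r.2) x y)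
      = (Fintype.card ({i // i ∈ S} → Fin d) : ℝ) * (Fintype.card ({i // i ∉ S} → Fin d) : ℝ)^2
        + (Fintype.card ({i // i ∈ S} → Fin d) : ℝ)^2 * (Fintype.card ({i // i ∉ S} → Fin d) : ℝ) := by
  classical
  set X := ({i // i ∈ S} → Fin d)
  set Z := ({i // i ∉ S} → Fin d)
  have hdes := design hD hDcard B horth hub
  -- complex version
  have hcpx : (∑ r : Fin (D+1) × Fin D, ∑ x : X, ∑ y : X,
      red S (B r.1 r.2) x y * red S (B r.1 r.2) y x)
      = ((Fintype.card X : ℝ) * (Fintype.card Z : ℝ)^2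
        + (Fintype.card X : ℝ)^2 * (Fintype.card Z : ℝ) : ℝ) := by
    rw [sum_comm3]
    have hexp : ∀ (r : Fin (D+1) × Fin D) (x y : X),
        red S (B r.1 r.2) x y * red S (B r.1 r.2) y x
        = ∑ z : Z, ∑ w : Z, B r.1 r.2 (combine S x z) * B r.1 r.2 (combine S y w)
            * star (B r.1 r.2 (combine S y z)) * star (B r.1 r.2 (combine S x w)) := by
      intro r x y
      unfold red
      rw [Finset.sum_mul_sum]
      exact Finset.sum_congr rfl fun z _ => Finset.sum_congr rfl fun w _ => by ring
    have hxy : ∀ x y : X, (∑ r : Fin (D+1) × Fin D,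
        red S (B r.1 r.2) x y * red S (B r.1 r.2) y x)
        = (Fintype.card Z : ℂ)^2 * (if x = y then 1 else 0) + (Fintype.card Z : ℂ) := by
      intro x y
      simp only [hexp]
      rw [sum_comm3]
      have hin : ∀ z w : Z, (∑ r : Fin (D+1) × Fin D,
          B r.1 r.2 (combine S x z) * B r.1 r.2 (combine S y w)
            * star (B r.1 r.2 (combine S y z)) * star (B r.1 r.2 (combine S x w)))
          = (if x = y then 1 else 0) + (if z = w then 1 else 0) := by
        intro z w
        rw [hdes (combine S x z) (combine S y w) (combine S y z) (combine S x w)]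
        have c1 : (combine S x z = combine S y z) ↔ x = y := by
          rw [combine_inj]; simp
        have c2 : (combine S y w = combine S x w) ↔ y = x := by
          rw [combine_inj]; simp
        have c3 : (combine S x z = combine S x w) ↔ z = w := by
          rw [combine_inj]; simp
        have c4 : (combine S y w = combine S y z) ↔ w = z := by
          rw [combine_inj]; simp
        rw [if_congr c1 rfl rfl, if_congr c2 rfl rfl, if_congr c3 rfl rfl,
          if_congr c4 rfl rfl]
        by_cases h1 : x = y <;> by_cases h2 : z = w <;>
          simp [h1, h2, eq_comm] <;> subst h1 <;> simp
      simp only [hin]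
      have hw : ∀ z : Z, ∑ w : Z, ((if x = y then (1:ℂ) else 0) + (if z = w then 1 else 0))
          = (Fintype.card Z : ℂ) * (if x = y then 1 else 0) + 1 := by
        intro z
        rw [Finset.sum_add_distrib, Finset.sum_const, Finset.card_univ,
          Finset.sum_ite_eq univ z (fun _ => (1:ℂ))]
        simp [nsmul_eq_mul]
      simp only [hw]
      rw [Finset.sum_add_distrib, Finset.sum_const, Finset.card_univ,
        Finset.sum_const, Finset.card_univ]
      simp only [nsmul_eq_mul, mul_one]
      ring
    simp only [hxy]
    have hy : ∀ x : X, ∑ y : X, ((Fintype.card Z : ℂ)^2 * (if x = y then 1 else 0)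
          + (Fintype.card Z : ℂ))
        = (Fintype.card Z : ℂ)^2 + (Fintype.card X : ℂ) * (Fintype.card Z : ℂ) := by
      intro x
      rw [Finset.sum_add_distrib, Finset.sum_const, Finset.card_univ]
      rw [show (∑ y : X, (Fintype.card Z:ℂ)^2 * (if x = y then 1 else 0))
          = (Fintype.card Z:ℂ)^2 by
        rw [← Finset.mul_sum, Finset.sum_ite_eq univ x (fun _ => (1:ℂ))]; simp]
      simp [nsmul_eq_mul]
    simp only [hy]
    rw [Finset.sum_const, Finset.card_univ]
    push_cast
    simp only [nsmul_eq_mul]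
    ring
  -- pass to the real statement
  have hcast : ((∑ r : Fin (D+1) × Fin D, ∑ x : X, ∑ y : X,
      Complex.normSq (red S (B r.1 r.2) x y) : ℝ) : ℂ)
      = ∑ r : Fin (D+1) × Fin D, ∑ x : X, ∑ y : X,
        red S (B r.1 r.2) x y * red S (B r.1 r.2) y x := by
    push_cast
    refine Finset.sum_congr rfl fun r _ => Finset.sum_congr rfl fun x _ =>
      Finset.sum_congr rfl fun y _ => ?_
    rw [← red_star S _ x y, Complex.star_def, Complex.mul_conj]
  rw [hcpx] at hcast
  exact_mod_cast hcast


/-- A maximal set of `d^N + 1` MUBs in dimension `d^N` whose remaining part contains a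
`k`-uniform vector has at most `d^k + 1` fully separable bases. -/
theorem stmt_10 (N d k : ℕ) (hN : 1 ≤ N) (hd : 2 ≤ d) (hk : 1 ≤ k) (hk2 : 2 * k ≤ N)
    (B : Fin (d^N + 1) → Fin (d^N) → (Fin N → Fin d) → ℂ)
    (horth : ∀ a i j, inner' (B a i) (B a j) = if i = j then 1 else 0)
    (hub : ∀ a b, a ≠ b → ∀ i j, ‖inner' (B a i) (B b j)‖^2 = 1/((d:ℝ)^N))
    (SepB : Finset (Fin (d^N + 1)))
    (hsep : ∀ a ∈ SepB, ∀ i, FullySep (B a i))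
    (hkuni : ∃ a, a ∉ SepB ∧ ∃ i, kUniform k (B a i)) :
    SepB.card ≤ d^k + 1 := by
  classical
  have hkN : k ≤ N := by omega
  obtain ⟨S, -, hScard⟩ := Finset.exists_subset_card_eq
    (s := (univ : Finset (Fin N))) (n := k) (by simpa using hkN)
  have hd0 : 0 < d := by omega
  have hD : 0 < d^N := pow_pos hd0 N
  have hDcard : Fintype.card (Fin N → Fin d) = d^N := by
    simp [Fintype.card_fun]
  have hub' : ∀ a b, a ≠ b → ∀ i j, ‖inner' (B a i) (B b j)‖^2 = 1/((d^N : ℕ):ℝ) := by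
    intro a b hab i j
    rw [hub a b hab i j]
    norm_num
  have hnorm : ∀ a i, inner' (B a i) (B a i) = 1 := by
    intro a i; simpa using horth a i i
  set X := ({i // i ∈ S} → Fin d)
  set Z := ({i // i ∉ S} → Fin d)
  have hcX : (Fintype.card X : ℝ) = (d:ℝ)^k := by
    simp [X, Fintype.card_fun, Fintype.card_coe, hScard]
  have hcZ : (Fintype.card Z : ℝ) = (d:ℝ)^(N-k) := by
    simp [Z, Fintype.card_fun, Fintype.card_subtype_compl, Fintype.card_coe, hScard]
  set c : ℝ := (d:ℝ)^k with hc
  set e : ℝ := (d:ℝ)^(N-k) with he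
  have hce : c * e = ((d^N : ℕ) : ℝ) := by
    rw [hc, he, ← pow_add]
    have : k + (N - k) = N := by omega
    rw [this]; push_cast; ring
  have hc2 : (2:ℝ) ≤ c := by
    calc (2:ℝ) ≤ (d:ℝ) := by exact_mod_cast hd
    _ ≤ (d:ℝ)^k := le_self_pow₀ (by exact_mod_cast (by omega : 1 ≤ d)) (by omega)
  have he1 : (1:ℝ) ≤ e :=
    one_le_pow₀ (by exact_mod_cast (by omega : 1 ≤ d))
  have hc0 : (0:ℝ) < c := lt_of_lt_of_le two_pos hc2
  set p : Fin (d^N+1) → Fin (d^N) → ℝ :=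
    fun a i => ∑ x, ∑ y, Complex.normSq (red S (B a i) x y) with hp
  have hsum : ∑ a, ∑ i, p a i = c * e^2 + c^2 * e := by
    have h0 := purity_sum hD hDcard S B horth hub'
    rw [Fintype.sum_prod_type] at h0
    rw [hcX, hcZ] at h0
    simp only [hp]
    exact h0
  have hlow : ∀ a i, 1/c ≤ p a i := by
    intro a i
    have h1 := purity_lb S (B a i) (hnorm a i)
    rw [hScard] at h1
    rw [div_le_iff₀ hc0]
    linarith [h1, mul_comm c (p a i)]
  have hsep1 : ∀ a ∈ SepB, ∀ i, p a i = 1 :=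
    fun a ha i => purity_sep S (B a i) (hnorm a i) (hsep a ha i)
  set b := SepB.card with hb
  set b' := SepBᶜ.card with hb'def
  have hbb' : b + b' = d^N + 1 := by
    rw [hb, hb'def, Finset.card_add_card_compl]; simp
  have hT1 : ∑ a ∈ SepB, ∑ i, p a i = (b:ℝ) * ((d^N : ℕ):ℝ) := by
    calc ∑ a ∈ SepB, ∑ i, p a i = ∑ a ∈ SepB, ((d^N : ℕ):ℝ) :=
          Finset.sum_congr rfl fun a ha => by
            rw [Finset.sum_congr rfl fun i _ => hsep1 a ha i]
            simp
      _ = (b:ℝ) * ((d^N:ℕ):ℝ) := by rw [Finset.sum_const, nsmul_eq_mul]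
  have hT2 : (b':ℝ) * (((d^N:ℕ):ℝ) * (1/c)) ≤ ∑ a ∈ SepBᶜ, ∑ i, p a i := by
    calc (b':ℝ) * (((d^N:ℕ):ℝ) * (1/c)) = ∑ _a ∈ SepBᶜ, ((d^N:ℕ):ℝ) * (1/c) := by
          rw [Finset.sum_const, nsmul_eq_mul, hb'def]
      _ ≤ ∑ a ∈ SepBᶜ, ∑ i, p a i := by
          refine Finset.sum_le_sum fun a _ => ?_
          calc ((d^N:ℕ):ℝ) * (1/c) = ∑ _i : Fin (d^N), 1/c := by
                rw [Finset.sum_const, nsmul_eq_mul]; simp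
            _ ≤ ∑ i, p a i := Finset.sum_le_sum fun i _ => hlow a i
  have htot : ∑ a ∈ SepB, ∑ i, p a i + ∑ a ∈ SepBᶜ, ∑ i, p a i = c*e^2 + c^2*e := by
    rw [Finset.sum_add_sum_compl]; exact hsum
  have hceR : c * e = ((d^N : ℕ):ℝ) := hce
  have h1 : (b:ℝ) * (c*e) + (b':ℝ) * ((c*e) * (1/c)) ≤ c*e^2 + c^2*e := by
    rw [hceR]; rw [← htot, ← hT1]; exact add_le_add_right hT2 _
  have h2 : (b:ℝ) + (b':ℝ) = c*e + 1 := by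
    have hq : ((b + b' : ℕ):ℝ) = ((d^N + 1 : ℕ):ℝ) := by exact_mod_cast congrArg Nat.cast hbb'
    push_cast at hq
    rw [hceR]
    push_cast
    linarith [hq]
  have h3 : (b':ℝ) * ((c*e) * (1/c)) = b' * e := by field_simp
  have h1' : (b:ℝ)*(c*e) + (b':ℝ)*e ≤ c*e^2 + c^2*e := by rw [← h3]; linarith [h1]
  have hbr' : (b':ℝ) = c*e + 1 - b := by linarith [h2]
  rw [hbr'] at h1'
  have he0 : (0:ℝ) < e := lt_of_lt_of_le one_pos he1
  have h6 : ((b:ℝ)*(c-1)) * e ≤ (c^2-1) * e := by nlinarith [h1']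
  have h5 : (b:ℝ)*(c-1) ≤ c^2 - 1 := le_of_mul_le_mul_right h6 he0
  have hc1 : (0:ℝ) < c - 1 := by linarith
  have h7 : (b:ℝ) * (c-1) ≤ (c+1)*(c-1) := by
    rw [show (c+1)*(c-1) = c^2-1 by ring]; exact h5
  have hbR : (b:ℝ) ≤ c + 1 := le_of_mul_le_mul_right h7 hc1
  have hfin : (SepB.card : ℝ) ≤ ((d^k + 1 : ℕ) : ℝ) := by
    push_cast
    exact hbR
  exact_mod_cast hfin
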